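/- Let n ≥ 1 and let Σ ⊆ ℂ∖{0} be closed under λ ↦ 1/λ. Let S = diag(−1,…,−1,1,…,1) with n+1 entries −1 followed by n−1 entries 1, and σ₁(X) = S X S. Let a ∈ M(2n,ℂ) be constant, set ā = S a S and E(x,λ) = exp(x(λ a + λ⁻¹ ā)). Suppose m₊, m₋ : ℝ × Σ → GL(2n,ℂ) and V : Σ → M(2n,ℂ) satisfy, for all x ∈ ℝ and λ ∈ Σ: m₊(x,λ) = m₋(x,λ) E(x,λ)⁻¹ V(λ) E(x,λ), σ₁(m₊(x,1/λ)) = m₋(x,λ), and σ₁(m₋(x,1/λ)) = m₊(x,λ). Then σ₁(V(1/λ)) V(λ) = I for all λ ∈ Σ. -/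

import Mathlib

/- STATEMENT 15: the σ₁-symmetry constraint (E:u-reality-5) on the continuous
   scattering data V established in Theorem 4.5 (T:sc). -/

noncomputable section

open Matrix

/-- S = diag(−1,…,−1,1,…,1) with n+1 entries −1 followed by n−1 entries 1,
    on Fin n ⊕ Fin n -/
def Smat (n : ℕ) : Matrix (Fin n ⊕ Fin n) (Fin n ⊕ Fin n) ℂ :=
  Matrix.diagonal (Sum.elim (fun _ => (-1 : ℂ)) (fun k => if (k : ℕ) = 0 then -1 else 1))

/-- σ₁(X) = S X S -/
def sigma1 {n : ℕ} (X : Matrix (Fin n ⊕ Fin n) (Fin n ⊕ Fin n) ℂ) :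
    Matrix (Fin n ⊕ Fin n) (Fin n ⊕ Fin n) ℂ :=
  Smat n * X * Smat n

/-- E(x,λ) = exp(x(λ a + λ⁻¹ ā)) -/
def Emat {n : ℕ} (a abar : Matrix (Fin n ⊕ Fin n) (Fin n ⊕ Fin n) ℂ) (x : ℝ) (lam : ℂ) :
    Matrix (Fin n ⊕ Fin n) (Fin n ⊕ Fin n) ℂ :=
  NormedSpace.exp ((x : ℂ) • (lam • a + lam⁻¹ • abar))

theorem sigma1_symmetry_of_scattering_data (n : ℕ) (hn : 1 ≤ n)
    (Sa : Set ℂ) (hS0 : (0 : ℂ) ∉ Sa) (hSinv : ∀ lam ∈ Sa, lam⁻¹ ∈ Sa)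
    (a : Matrix (Fin n ⊕ Fin n) (Fin n ⊕ Fin n) ℂ)
    (abar : Matrix (Fin n ⊕ Fin n) (Fin n ⊕ Fin n) ℂ)
    (habar : abar = Smat n * a * Smat n)
    (mp mm : ℝ → ℂ → Matrix (Fin n ⊕ Fin n) (Fin n ⊕ Fin n) ℂ)
    (V : ℂ → Matrix (Fin n ⊕ Fin n) (Fin n ⊕ Fin n) ℂ)
    (hmpU : ∀ x : ℝ, ∀ lam ∈ Sa, IsUnit (mp x lam))
    (hmmU : ∀ x : ℝ, ∀ lam ∈ Sa, IsUnit (mm x lam))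
    (hjump : ∀ x : ℝ, ∀ lam ∈ Sa,
      mp x lam = mm x lam * (Emat a abar x lam)⁻¹ * V lam * Emat a abar x lam)
    (hsym1 : ∀ x : ℝ, ∀ lam ∈ Sa, sigma1 (mp x lam⁻¹) = mm x lam)
    (hsym2 : ∀ x : ℝ, ∀ lam ∈ Sa, sigma1 (mm x lam⁻¹) = mp x lam) :
    ∀ lam ∈ Sa, sigma1 (V lam⁻¹) * V lam = 1 := by
  have hSS : Smat n * Smat n = 1 := by
    rw [Smat, Matrix.diagonal_mul_diagonal]
    convert Matrix.diagonal_one with i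
    rcases i with i | k
    · simp
    · by_cases h : (k : ℕ) = 0 <;> simp [h]
  have hE0 : ∀ lam : ℂ, Emat a abar 0 lam = 1 := by
    intro lam
    simp [Emat, NormedSpace.exp_zero]
  intro lam hlam
  have hinv : lam⁻¹ ∈ Sa := hSinv lam hlam
  have h1 : mp 0 lam = mm 0 lam * V lam := by
    have := hjump 0 lam hlam
    simpa [hE0, inv_one] using this
  have h2 : mp 0 lam⁻¹ = mm 0 lam⁻¹ * V lam⁻¹ := by
    have := hjump 0 lam⁻¹ hinv
    simpa [hE0, inv_one] using this
  have hmul : ∀ A B : Matrix (Fin n ⊕ Fin n) (Fin n ⊕ Fin n) ℂ,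
      sigma1 (A * B) = sigma1 A * sigma1 B := by
    intro A B
    simp only [sigma1]
    calc Smat n * (A * B) * Smat n
        = Smat n * A * (Smat n * Smat n) * B * Smat n := by
          rw [hSS]; noncomm_ring
      _ = Smat n * A * Smat n * (Smat n * B * Smat n) := by noncomm_ring
  have key : mm 0 lam = mm 0 lam * (V lam * sigma1 (V lam⁻¹)) := by
    have e1 : sigma1 (mp 0 lam⁻¹) = mm 0 lam := hsym1 0 lam hlam
    have e2 : sigma1 (mm 0 lam⁻¹) = mp 0 lam := hsym2 0 lam hlam
    calc mm 0 lam = sigma1 (mp 0 lam⁻¹) := e1.symm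
      _ = sigma1 (mm 0 lam⁻¹) * sigma1 (V lam⁻¹) := by rw [h2, hmul]
      _ = mm 0 lam * V lam * sigma1 (V lam⁻¹) := by rw [e2, h1]
      _ = mm 0 lam * (V lam * sigma1 (V lam⁻¹)) := by rw [mul_assoc]
  have hu := hmmU 0 lam hlam
  have : (V lam * sigma1 (V lam⁻¹)) = 1 :=
    hu.mul_left_cancel (by rw [mul_one]; exact key.symm)
  exact mul_eq_one_comm.mp this

end
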